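/- Let ε > 0 and let Δ be a positive integer, let a = ε/Δ, let η₀ be a real number, let p = (e^a − 1)/(e^a + 1), and let ι be a finite index set. Let c, b, b' : ι → ℤ be integer vectors with ∑_{i∈ι} |b(i) − b'(i)| ≤ Δ. Then ∏_{i∈ι} p·e^{−a·|(c(i)−b(i))−η₀|} ≤ e^{ε} · ∏_{i∈ι} p·e^{−a·|(c(i)−b'(i))−η₀|}. -/

import Mathlib

/-- Core computation of Lemma B.1: the probability of producing the same noisy bin
counts from neighboring bin-count vectors (total difference at most Δ) differs by a
factor of at most e^ε. -/
theorem laplace_product_ratio (ε : ℝ) (hε : 0 < ε) (Δ : ℕ) (hΔ : 0 < Δ) (η₀ : ℝ)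
    {ι : Type*} [Fintype ι] (c b b' : ι → ℤ)
    (hsum : ∑ i, |b i - b' i| ≤ (Δ : ℤ)) :
    ∏ i, ((Real.exp (ε / (Δ : ℝ)) - 1) / (Real.exp (ε / (Δ : ℝ)) + 1) *
        Real.exp (-(ε / (Δ : ℝ)) * |((c i - b i : ℤ) : ℝ) - η₀|)) ≤
      Real.exp ε *
        ∏ i, ((Real.exp (ε / (Δ : ℝ)) - 1) / (Real.exp (ε / (Δ : ℝ)) + 1) *
          Real.exp (-(ε / (Δ : ℝ)) * |((c i - b' i : ℤ) : ℝ) - η₀|)) := by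
  set a := ε / (Δ : ℝ) with ha
  have hΔR : (0 : ℝ) < (Δ : ℝ) := by exact_mod_cast hΔ
  have ha0 : 0 < a := div_pos hε hΔR
  have hp : 0 < (Real.exp a - 1) / (Real.exp a + 1) := by
    have h1 : 1 < Real.exp a := by nlinarith [Real.add_one_le_exp a]
    have h2 : 0 < Real.exp a + 1 := by positivity
    exact div_pos (by linarith) h2
  rw [Finset.prod_mul_distrib, Finset.prod_mul_distrib, ← Real.exp_sum, ← Real.exp_sum,
    mul_comm (Real.exp ε), mul_assoc, ← Real.exp_add]
  have hprodpos : (0 : ℝ) < ∏ _i : ι, (Real.exp a - 1) / (Real.exp a + 1) :=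
    Finset.prod_pos fun _ _ => hp
  apply mul_le_mul_of_nonneg_left _ hprodpos.le
  apply Real.exp_le_exp.mpr
  have key : ∀ i : ι, -a * |((c i - b i : ℤ) : ℝ) - η₀| ≤
      -a * |((c i - b' i : ℤ) : ℝ) - η₀| + a * |((b i - b' i : ℤ) : ℝ)| := by
    intro i
    have h := abs_sub_abs_le_abs_sub (((c i - b' i : ℤ) : ℝ) - η₀) (((c i - b i : ℤ) : ℝ) - η₀)
    have hcast : (((c i - b' i : ℤ) : ℝ) - η₀) - (((c i - b i : ℤ) : ℝ) - η₀)
        = ((b i - b' i : ℤ) : ℝ) := by push_cast; ring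
    rw [hcast] at h
    nlinarith [ha0]
  calc ∑ i, -a * |((c i - b i : ℤ) : ℝ) - η₀|
      ≤ ∑ i, (-a * |((c i - b' i : ℤ) : ℝ) - η₀| + a * |((b i - b' i : ℤ) : ℝ)|) :=
        Finset.sum_le_sum fun i _ => key i
    _ = (∑ i, -a * |((c i - b' i : ℤ) : ℝ) - η₀|) + a * ∑ i, |((b i - b' i : ℤ) : ℝ)| := by
        rw [Finset.sum_add_distrib, Finset.mul_sum]
    _ ≤ (∑ i, -a * |((c i - b' i : ℤ) : ℝ) - η₀|) + ε := by
        have hsumR : ∑ i, |((b i - b' i : ℤ) : ℝ)| ≤ (Δ : ℝ) := by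
          have : ((∑ i, |b i - b' i| : ℤ) : ℝ) ≤ ((Δ : ℤ) : ℝ) := by exact_mod_cast hsum
          push_cast at this
          simpa using this
        have : a * ∑ i, |((b i - b' i : ℤ) : ℝ)| ≤ a * (Δ : ℝ) :=
          mul_le_mul_of_nonneg_left hsumR ha0.le
        have haΔ : a * (Δ : ℝ) = ε := by rw [ha, div_mul_cancel₀ _ hΔR.ne']
        linarith
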